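/- Let (ν, σ, μ) ∈ (0, ∞)³, a ∈ [0, 1], and (x, α, w) ∈ ℝ³ be such that one of the following three conditions holds: (1) x/α > 0; (2) x/α < 0 and μ ≥ 1; (3) x/α < 0, μ < 1 and, for some ε ∈ (0, 1), |x| ≥ 2|α|/(εμ) and a ∈ [0, 1 − ε]. Then exp(−(1 − a)x/(2α) − (1/2)·μ^{1−a}·e^{−(1−a)x/α}) · (νσ² + a²(x − αw)²)^{−(ν+1)/2} ≤ max( exp(−|x|/(4|α|) + (ν+1)/2) · (νσ²)^{−(ν+1)/2}, (νσ² + (x − αw)²)^{−(ν+1)/2} ). -/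

import Mathlib

lemma two_mul_le_exp' (u : ℝ) : 2 * u ≤ Real.exp u := by
  rcases le_total u 1 with h | h
  · nlinarith [Real.add_one_le_exp u]
  · have h1 := Real.add_one_le_exp (u - 1)
    have h2 : Real.exp u = Real.exp (u - 1) * Real.exp 1 := by
      rw [← Real.exp_add]; ring_nf
    nlinarith [Real.exp_one_gt_d9, Real.exp_pos (u - 1)]

lemma sq_le_exp' (u : ℝ) (hu : 0 ≤ u) : u ^ 2 ≤ Real.exp u := by
  have h1 := two_mul_le_exp' (u / 2)
  have h2 : Real.exp (u / 2) ^ 2 = Real.exp u := by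
    rw [sq, ← Real.exp_add]; ring_nf
  have h3 : u ≤ Real.exp (u / 2) := by linarith
  calc u ^ 2 ≤ Real.exp (u / 2) ^ 2 := by nlinarith [Real.exp_pos (u/2)]
    _ = Real.exp u := h2

set_option maxHeartbeats 1000000 in
theorem stmt5 (ν σ μ : ℝ) (hν : 0 < ν) (hσ : 0 < σ) (hμ : 0 < μ)
    (a : ℝ) (ha : a ∈ Set.Icc (0 : ℝ) 1) (x α w : ℝ)
    (hcase : 0 < x / α ∨ (x / α < 0 ∧ 1 ≤ μ) ∨
      (x / α < 0 ∧ μ < 1 ∧ ∃ ε ∈ Set.Ioo (0 : ℝ) 1,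
        2 * |α| / (ε * μ) ≤ |x| ∧ a ∈ Set.Icc (0 : ℝ) (1 - ε))) :
    Real.exp (-((1 - a) * x) / (2 * α) -
        (1 / 2) * μ ^ (1 - a) * Real.exp (-((1 - a) * x) / α)) *
        (ν * σ ^ 2 + a ^ 2 * (x - α * w) ^ 2) ^ (-(ν + 1) / 2) ≤
      max (Real.exp (-|x| / (4 * |α|) + (ν + 1) / 2) * (ν * σ ^ 2) ^ (-(ν + 1) / 2))
        ((ν * σ ^ 2 + (x - α * w) ^ 2) ^ (-(ν + 1) / 2)) := by
  obtain ⟨ha0, ha1⟩ := ha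
  have hα : α ≠ 0 := by
    rintro rfl
    simp only [div_zero] at hcase
    rcases hcase with h | ⟨h, _⟩ | ⟨h, _⟩ <;> exact absurd h (by norm_num)
  have hαabs : (0:ℝ) < |α| := abs_pos.mpr hα
  set r : ℝ := x / α with hr
  have e1 : -((1 - a) * x) / (2 * α) = -((1 - a) * r) / 2 := by
    rw [hr]; field_simp
  have e2 : -((1 - a) * x) / α = -((1 - a) * r) := by
    rw [hr]; field_simp
  have hrabs : |r| = |x| / |α| := by rw [hr, abs_div]
  have hμpos : (0:ℝ) < μ ^ (1 - a) := Real.rpow_pos_of_pos hμ _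
  -- Step A: exponent bound
  have hE : -((1 - a) * x) / (2 * α) -
      (1 / 2) * μ ^ (1 - a) * Real.exp (-((1 - a) * x) / α) ≤ -((1 - a) * |r|) / 2 := by
    rw [e1, e2]
    rcases hcase with hpos | ⟨hneg, hμ1⟩ | ⟨hneg, hμlt, ε, ⟨hε0, hε1⟩, hxbig, haε0, haε1⟩
    · rw [abs_of_pos hpos]
      nlinarith [Real.exp_pos (-((1 - a) * r)), hμpos]
    · rw [abs_of_neg hneg]
      set u : ℝ := (1 - a) * (-r) with hu
      have hu0 : 0 ≤ u := mul_nonneg (by linarith) (by linarith)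
      have h1 : (1:ℝ) ≤ μ ^ (1 - a) := by
        calc (1:ℝ) = 1 ^ (1 - a) := (Real.one_rpow _).symm
          _ ≤ μ ^ (1 - a) := Real.rpow_le_rpow (by norm_num) hμ1 (by linarith)
      have h2 : 2 * u ≤ Real.exp u := two_mul_le_exp' u
      have h3 : -((1 - a) * r) = u := by rw [hu]; ring
      rw [h3]
      nlinarith [Real.exp_pos u]
    · rw [abs_of_neg hneg]
      set u : ℝ := (1 - a) * (-r) with hu
      have h3 : -((1 - a) * r) = u := by rw [hu]; ring
      rw [h3]
      have hra : 2 / (ε * μ) ≤ -r := by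
        have h := (div_le_div_iff_of_pos_right hαabs).mpr hxbig
        have hL : 2 * |α| / (ε * μ) / |α| = 2 / (ε * μ) := by
          field_simp
        rw [hL, ← hrabs, abs_of_neg hneg] at h
        exact h
      have hu2 : 2 / μ ≤ u := by
        have h4 : ε ≤ 1 - a := by linarith
        have h5 : 0 < -r := by linarith
        calc 2 / μ = ε * (2 / (ε * μ)) := by field_simp
          _ ≤ ε * (-r) := by
            apply mul_le_mul_of_nonneg_left hra hε0.le
          _ ≤ (1 - a) * (-r) := by
            apply mul_le_mul_of_nonneg_right h4 h5.le
      have hu0 : 0 ≤ u := le_trans (by positivity) hu2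
      have hμ2 : μ ≤ μ ^ (1 - a) := by
        calc μ = μ ^ (1:ℝ) := (Real.rpow_one μ).symm
          _ ≤ μ ^ (1 - a) := Real.rpow_le_rpow_of_exponent_ge hμ hμlt.le (by linarith)
      have hsq : u ^ 2 ≤ Real.exp u := sq_le_exp' u hu0
      have hμu : 2 ≤ μ * u := by
        rw [div_le_iff₀ hμ] at hu2; linarith
      -- need: u/2 - (1/2) * μ^(1-a) * exp u ≤ -u/2, i.e. 2u ≤ μ^(1-a) exp u
      have key : 2 * u ≤ μ ^ (1 - a) * Real.exp u := by
        have : 2 * u ≤ μ * Real.exp u := by nlinarith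
        nlinarith [Real.exp_pos u]
      nlinarith
  have hEexp : Real.exp (-((1 - a) * x) / (2 * α) -
      (1 / 2) * μ ^ (1 - a) * Real.exp (-((1 - a) * x) / α)) ≤
      Real.exp (-((1 - a) * |r|) / 2) := Real.exp_le_exp.mpr hE
  have hB : (0:ℝ) < ν * σ ^ 2 := by positivity
  have hD : (0:ℝ) ≤ (x - α * w) ^ 2 := sq_nonneg _
  have hA : (0:ℝ) < ν * σ ^ 2 + a ^ 2 * (x - α * w) ^ 2 := by positivity
  rcases le_or_gt ((2 * a - 1) * |r|) (2 * (ν + 1)) with hroute | hroute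
  · -- route 1: first max term
    apply le_max_of_le_left
    have h1 : Real.exp (-((1 - a) * |r|) / 2) ≤
        Real.exp (-|x| / (4 * |α|) + (ν + 1) / 2) := by
      apply Real.exp_le_exp.mpr
      have h4 : -|x| / (4 * |α|) = -|r| / 4 := by
        rw [hrabs]; field_simp
      rw [h4]
      linarith [abs_nonneg r]
    have h2 : (ν * σ ^ 2 + a ^ 2 * (x - α * w) ^ 2) ^ (-(ν + 1) / 2) ≤
        (ν * σ ^ 2) ^ (-(ν + 1) / 2) :=
      Real.rpow_le_rpow_of_nonpos hB (le_add_of_nonneg_right (by positivity)) (by linarith)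
    exact mul_le_mul (hEexp.trans h1) h2 (Real.rpow_nonneg hA.le _) (Real.exp_pos _).le
  · -- route 2: second max term
    apply le_max_of_le_right
    have ha05 : 1 / 2 < a := by
      by_contra h
      push_neg at h
      have : (2 * a - 1) * |r| ≤ 0 :=
        mul_nonpos_of_nonpos_of_nonneg (by linarith) (abs_nonneg r)
      linarith
    have hapos : 0 < a := by linarith
    have ha2 : (0:ℝ) < a ^ 2 := pow_pos hapos 2
    have hBD : (0:ℝ) < ν * σ ^ 2 + (x - α * w) ^ 2 := by positivity
    have hE2 : Real.exp (-((1 - a) * x) / (2 * α) -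
        (1 / 2) * μ ^ (1 - a) * Real.exp (-((1 - a) * x) / α)) ≤
        (a ^ 2) ^ ((ν + 1) / 2) := by
      refine hEexp.trans ?_
      rw [Real.rpow_def_of_pos ha2]
      apply Real.exp_le_exp.mpr
      have hlog : Real.log (a ^ 2) = 2 * Real.log a := by
        rw [Real.log_pow]; norm_num
      rw [hlog]
      -- goal: -((1-a)*|r|)/2 ≤ 2 * log a * ((ν+1)/2)
      have hinv := Real.add_one_le_exp (-Real.log a)
      rw [Real.exp_neg, Real.exp_log hapos] at hinv
      -- hinv : -log a + 1 ≤ a⁻¹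
      have f1 : a - a * Real.log a ≤ 1 := by
        have h2 := mul_le_mul_of_nonneg_left hinv hapos.le
        rw [mul_inv_cancel₀ (ne_of_gt hapos)] at h2
        nlinarith
      have key : 2 * (ν + 1) ≤ a * |r| := by nlinarith [abs_nonneg r]
      have h3 : 0 ≤ (1 - a) * (a * |r| - 2 * (ν + 1)) :=
        mul_nonneg (by linarith) (by linarith)
      have h4 : 0 ≤ (ν + 1) * (1 - a + a * Real.log a) :=
        mul_nonneg (by linarith) (by linarith)
      nlinarith [hapos, h3, h4]
    have hP2 : (ν * σ ^ 2 + a ^ 2 * (x - α * w) ^ 2) ^ (-(ν + 1) / 2) ≤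
        (a ^ 2 * (ν * σ ^ 2 + (x - α * w) ^ 2)) ^ (-(ν + 1) / 2) := by
      have ha2le1 : a ^ 2 ≤ 1 := by nlinarith
      apply Real.rpow_le_rpow_of_nonpos (by positivity) (by nlinarith [hB, hD]) (by linarith)
    calc Real.exp (-((1 - a) * x) / (2 * α) -
          (1 / 2) * μ ^ (1 - a) * Real.exp (-((1 - a) * x) / α)) *
          (ν * σ ^ 2 + a ^ 2 * (x - α * w) ^ 2) ^ (-(ν + 1) / 2)
        ≤ (a ^ 2) ^ ((ν + 1) / 2) *
          (a ^ 2 * (ν * σ ^ 2 + (x - α * w) ^ 2)) ^ (-(ν + 1) / 2) :=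
          mul_le_mul hE2 hP2 (Real.rpow_nonneg hA.le _) (Real.rpow_nonneg ha2.le _)
      _ = (a ^ 2) ^ ((ν + 1) / 2) * ((a ^ 2) ^ (-(ν + 1) / 2) *
          (ν * σ ^ 2 + (x - α * w) ^ 2) ^ (-(ν + 1) / 2)) := by
          rw [Real.mul_rpow ha2.le hBD.le]
      _ = ((a ^ 2) ^ ((ν + 1) / 2) * (a ^ 2) ^ (-(ν + 1) / 2)) *
          (ν * σ ^ 2 + (x - α * w) ^ 2) ^ (-(ν + 1) / 2) := by ring
      _ = (ν * σ ^ 2 + (x - α * w) ^ 2) ^ (-(ν + 1) / 2) := by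
          rw [← Real.rpow_add ha2, show (ν + 1) / 2 + -(ν + 1) / 2 = 0 by ring,
            Real.rpow_zero, one_mul]
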